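/- If a chemical x ∈ X_F satisfies the food-generation condition (F) witnessed by reaction sets R₁,…,Rₙ, then the associated F-tree T^R(x) satisfies x ∈ ev(T^R(x))(∅); i.e., there is an element φ of the extended semigroup model S^R with x ∈ φ(∅). -/

import Mathlib

open Classical in
/-- The function `φ_r` of a reaction with reactants `dm`, products `rn`, and food set `F`. -/
noncomputable def phiR {X : Type*} (dm rn F : Set X) : Set X → Set X :=
  fun Y => if dm ⊆ Y ∪ F then rn \ F else ∅

/-- The extended semigroup model `S^R` of a CRS: the closure of the generators
`φ_r` and the zero map under composition and pointwise union. -/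
inductive SR {X R : Type*} (dm rn : R → Set X) (F : Set X) : (Set X → Set X) → Prop
  | zero : SR dm rn F (fun _ => ∅)
  | gen (r : R) : SR dm rn F (phiR (dm r) (rn r) F)
  | comp {φ ψ} : SR dm rn F φ → SR dm rn F ψ → SR dm rn F (φ ∘ ψ)
  | add {φ ψ} : SR dm rn F φ → SR dm rn F ψ → SR dm rn F (fun Y => φ Y ∪ ψ Y)

/-- The root labels `Ψ_i = ev(T_i^R)` of the F-trees:
`Ψ₀ = Σ_{r ∈ Rs 0} φ_r` and `Ψ_{i+1} = Σ_{r ∈ ∪_{j ≤ i+1} Rs j} φ_r ∘ Ψ_i`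
(indices here are 0-based). -/
noncomputable def Psi {X R : Type*} (dm rn : R → Set X) (F : Set X)
    (Rs : ℕ → Set R) : ℕ → Set X → Set X
  | 0 => fun Y => ⋃ r ∈ Rs 0, phiR (dm r) (rn r) F Y
  | (i + 1) => fun Y =>
      ⋃ r ∈ ⋃ j ∈ Finset.range (i + 2), Rs j,
        phiR (dm r) (rn r) F (Psi dm rn F Rs i Y)

lemma SR_union {X R : Type*} (dm rn : R → Set X) (F : Set X)
    (S : Set R) (hS : S.Finite) :
    SR dm rn F (fun Y => ⋃ r ∈ S, phiR (dm r) (rn r) F Y) := by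
  refine Set.Finite.induction_on S hS ?_ ?_
  · have := SR.zero (dm := dm) (rn := rn) (F := F)
    convert this using 1
    funext Y; simp
  · intro a s _ _ ih
    have := SR.add (SR.gen (dm := dm) (rn := rn) (F := F) a) ih
    convert this using 1
    funext Y
    simp [Set.biUnion_insert]

lemma SR_Psi {X R : Type*} [Fintype R] (dm rn : R → Set X) (F : Set X)
    (Rs : ℕ → Set R) : ∀ i, SR dm rn F (Psi dm rn F Rs i)
  | 0 => SR_union dm rn F (Rs 0) (Set.toFinite _)
  | (i + 1) =>
      SR.comp (SR_union dm rn F (⋃ j ∈ Finset.range (i + 2), Rs j) (Set.toFinite _))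
        (SR_Psi dm rn F Rs i)

lemma phiR_of_subset {X : Type*} {dm rn F Y : Set X} (h : dm ⊆ Y ∪ F) :
    phiR dm rn F Y = rn \ F := by
  simp [phiR, h]

theorem stmt_11 {X R : Type*} [Fintype X] [Fintype R]
    (dm rn : R → Set X) (F : Set X) (Rs : ℕ → Set R) (n : ℕ) (hn : 0 < n)
    (x : X) (hx : x ∉ F)
    (hF1 : ∀ r ∈ Rs 0, dm r ⊆ F)
    (hF2 : ∀ i, i + 1 < n → ∀ r ∈ Rs (i + 1),
      dm r ⊆ (⋃ j ∈ Finset.range (i + 1), ⋃ r' ∈ Rs j, rn r') ∪ F)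
    (hF3 : x ∈ ⋃ r ∈ Rs (n - 1), rn r) :
    x ∈ Psi dm rn F Rs (n - 1) ∅ ∧
    ∃ φ : Set X → Set X, SR dm rn F φ ∧ x ∈ φ ∅ := by
  have key : ∀ i, i < n → ∀ j ≤ i, ∀ r ∈ Rs j, rn r \ F ⊆ Psi dm rn F Rs i ∅ := by
    intro i
    induction i with
    | zero =>
        intro _ j hj r hr
        interval_cases j
        have hd : dm r ⊆ (∅ : Set X) ∪ F := by
          simpa using hF1 r hr
        intro y hy
        simp only [Psi, Set.mem_iUnion]
        exact ⟨r, hr, by rw [phiR_of_subset hd]; exact hy⟩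
    | succ i ih =>
        intro hi j hj r hr
        have hiin : i < n := Nat.lt_of_succ_lt hi
        have hd : dm r ⊆ Psi dm rn F Rs i ∅ ∪ F := by
          match j, hj with
          | 0, _ =>
              exact (hF1 r hr).trans (Set.subset_union_right)
          | (k + 1), hj =>
              have hk : k + 1 < n := lt_of_le_of_lt hj hi
              refine (hF2 k hk r hr).trans ?_
              intro z hz
              rcases hz with hz | hz
              · simp only [Set.mem_iUnion, Finset.mem_range] at hz
                obtain ⟨j', hj', r', hr', hz⟩ := hz
                by_cases hzF : z ∈ F
                · exact Or.inr hzF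
                · refine Or.inl (ih hiin j' ?_ r' hr' ⟨hz, hzF⟩)
                  omega
              · exact Or.inr hz
        intro y hy
        show y ∈ ⋃ r ∈ ⋃ j ∈ Finset.range (i + 2), Rs j,
          phiR (dm r) (rn r) F (Psi dm rn F Rs i ∅)
        simp only [Set.mem_iUnion, Finset.mem_range]
        refine ⟨r, ⟨j, by omega, hr⟩, ?_⟩
        rw [phiR_of_subset hd]; exact hy
  obtain ⟨r, hr, hxr⟩ := Set.mem_iUnion₂.mp hF3
  have hmem : x ∈ Psi dm rn F Rs (n - 1) ∅ :=
    key (n - 1) (by omega) (n - 1) le_rfl r hr ⟨hxr, hx⟩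
  exact ⟨hmem, Psi dm rn F Rs (n - 1), SR_Psi dm rn F Rs (n - 1), hmem⟩
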